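/- For all d ∈ D□ and δL, δR ∈ D□*, the infinite tape specification and the tape controller composed with the (infinite) queue are divergence-preserving branching bisimilar: T_{E∞T}(T_{δL ď δR}) ≈Δb T_{ET ∪ E∞Q}([H_d ∥ Q_{δR ⊥ δL}]_{{i,o}}). -/

import Mathlib

namespace RTMPaper

/-! ## Labelled transition systems

An `A`-labelled transition system; transition labels are drawn from `Option A`,
where `none` plays the role of the unobservable action τ. -/

structure LTS (A : Type) where
  State : Type
  tr : State → Option A → State → Prop
  init : State
  final : Set State

namespace LTS

variable {A : Type}

/-- A τ-step. -/
def tauStep (T : LTS A) (s t : T.State) : Prop := T.tr s none t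

/-- `⇒` : the reflexive–transitive closure of τ-steps. -/
def tauReach (T : LTS A) : T.State → T.State → Prop :=
  Relation.ReflTransGen T.tauStep

/-- `s —(a)→ t` : either `s —a→ t`, or `a = τ` and `s = t`. -/
def optStep (T : LTS A) (s : T.State) (a : Option A) (t : T.State) : Prop :=
  T.tr s a t ∨ (a = none ∧ s = t)

/-- The set of outgoing transitions of a state. -/
def out (T : LTS A) (s : T.State) : Set (Option A × T.State) :=
  {p | T.tr s p.1 p.2}

def FinitelyBranching (T : LTS A) : Prop := ∀ s, (T.out s).Finite

/-- The branching degree of `T` is bounded by `B`. -/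
def BranchingDegreeBoundedBy (T : LTS A) (B : ℕ) : Prop :=
  ∀ s, (T.out s).Finite ∧ (T.out s).ncard ≤ B

def BoundedlyBranching (T : LTS A) : Prop := ∃ B, T.BranchingDegreeBoundedBy B

/-- A deterministic transition system. -/
def Deterministic (T : LTS A) : Prop :=
  (∀ s a t₁ t₂, T.tr s a t₁ → T.tr s a t₂ → t₁ = t₂) ∧
  (∀ s t, T.tr s none t → ∀ a u, T.tr s a u → a = none)

/-- Relabelling of an LTS along a map of action alphabets (τ is mapped to τ). -/
def relabel {A' : Type} (f : A → A') (T : LTS A) : LTS A' where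
  State := T.State
  tr s a t := ∃ a₀ : Option A, T.tr s a₀ t ∧ a = Option.map f a₀
  init := T.init
  final := T.final

end LTS

/-! ## (Divergence-preserving) branching bisimilarity -/

structure IsBranchingBisimulation {A : Type} (T₁ T₂ : LTS A)
    (R : T₁.State → T₂.State → Prop) : Prop where
  fwd : ∀ s₁ s₂ a s₁', R s₁ s₂ → T₁.tr s₁ a s₁' →
    ∃ s₂'' s₂', T₂.tauReach s₂ s₂'' ∧ T₂.optStep s₂'' a s₂' ∧ R s₁ s₂'' ∧ R s₁' s₂'
  bwd : ∀ s₁ s₂ a s₂', R s₁ s₂ → T₂.tr s₂ a s₂' →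
    ∃ s₁'' s₁', T₁.tauReach s₁ s₁'' ∧ T₁.optStep s₁'' a s₁' ∧ R s₁'' s₂ ∧ R s₁' s₂'
  finFwd : ∀ s₁ s₂, R s₁ s₂ → s₁ ∈ T₁.final →
    ∃ s₂', T₂.tauReach s₂ s₂' ∧ R s₁ s₂' ∧ s₂' ∈ T₂.final
  finBwd : ∀ s₁ s₂, R s₁ s₂ → s₂ ∈ T₂.final →
    ∃ s₁', T₁.tauReach s₁ s₁' ∧ R s₁' s₂ ∧ s₁' ∈ T₁.final

/-- The divergence-preservation conditions on a branching bisimulation. -/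
def DivergencePreserving {A : Type} (T₁ T₂ : LTS A)
    (R : T₁.State → T₂.State → Prop) : Prop :=
  (∀ (s₂ : T₂.State) (f : ℕ → T₁.State),
      (∀ i, T₁.tauStep (f i) (f (i + 1))) → (∀ i, R (f i) s₂) →
      ∃ s₂', Relation.TransGen T₂.tauStep s₂ s₂' ∧ ∃ i, R (f i) s₂') ∧
  (∀ (s₁ : T₁.State) (f : ℕ → T₂.State),
      (∀ i, T₂.tauStep (f i) (f (i + 1))) → (∀ i, R s₁ (f i)) →
      ∃ s₁', Relation.TransGen T₁.tauStep s₁ s₁' ∧ ∃ i, R s₁' (f i))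

/-- `T₁ ≈b T₂` : branching bisimilarity. -/
def BranchingBisimilar {A : Type} (T₁ T₂ : LTS A) : Prop :=
  ∃ R, IsBranchingBisimulation T₁ T₂ R ∧ R T₁.init T₂.init

/-- `T₁ ≈Δb T₂` : divergence-preserving branching bisimilarity. -/
def DPBranchingBisimilar {A : Type} (T₁ T₂ : LTS A) : Prop :=
  ∃ R, IsBranchingBisimulation T₁ T₂ R ∧ DivergencePreserving T₁ T₂ R ∧
    R T₁.init T₂.init

/-! ## Effective and computable transition systems -/

/-- A set of natural numbers is recursively enumerable. -/
def REset (X : Set ℕ) : Prop :=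
  ∃ f : ℕ →. Unit, Partrec f ∧ ∀ n, (f n).Dom ↔ n ∈ X

/-- A (finitely branching) LTS is computable if, with respect to some injective
codings of its labels and states into ℕ, the functions `out` and `fin` are
recursive. -/
def LTS.IsComputable {A : Type} (T : LTS A) : Prop :=
  ∃ hfb : ∀ s, (T.out s).Finite,
    ∃ (cL : Option A → ℕ) (cS : T.State → ℕ),
      Function.Injective cL ∧ Function.Injective cS ∧
      (∃ fo : ℕ → ℕ, Computable fo ∧ ∀ s,
        fo (cS s) =
          Encodable.encode
            (((hfb s).toFinset).image fun p => Nat.pair (cL p.1) (cS p.2))) ∧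
      (∃ ff : ℕ → ℕ, Computable ff ∧ ∀ s,
        (s ∈ T.final → ff (cS s) = 1) ∧ (s ∉ T.final → ff (cS s) = 0))

/-- A (finitely branching) LTS is effective if, with respect to some injective
codings of its labels and states into ℕ, its transition relation and its set of
final states are recursively enumerable. -/
def LTS.IsEffective {A : Type} (T : LTS A) : Prop :=
  T.FinitelyBranching ∧
  ∃ (cL : Option A → ℕ) (cS : T.State → ℕ),
    Function.Injective cL ∧ Function.Injective cS ∧
    REset {n | ∃ s a t, T.tr s a t ∧ n = Nat.pair (cS s) (Nat.pair (cL a) (cS t))} ∧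
    REset {n | ∃ s ∈ T.final, n = cS s}

/-! ## Reactive Turing machines -/

inductive Move : Type
  | L | R
deriving DecidableEq

instance : Fintype Move where
  elems := {Move.L, Move.R}
  complete := by intro x; cases x <;> simp

/-- A tape instance: the content left of the head (nearest symbol first), the
symbol under the head, and the content right of the head (nearest symbol
first).  Tape symbols are `Option D`, with `none` the blank symbol □. -/
structure Tape (D : Type) where
  left : List (Option D)
  head : Option D
  right : List (Option D)

def Tape.empty (D : Type) : Tape D := ⟨[], none, []⟩

/-- Write `e` at the head position and move the head in direction `m`. -/
def Tape.writeMove {D : Type} (t : Tape D) (e : Option D) : Move → Tape D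
  | .L =>
    match t.left with
    | [] => ⟨[], none, e :: t.right⟩
    | x :: l => ⟨l, x, e :: t.right⟩
  | .R =>
    match t.right with
    | [] => ⟨e :: t.left, none, []⟩
    | x :: r => ⟨e :: t.left, x, r⟩

/-- A reactive Turing machine with action symbols `A` (labels `Option A`,
`none` being τ) and data symbols `D` (tape symbols `Option D`, `none` being
the blank symbol). -/
structure RTM (A D : Type) where
  Q : Type
  [instQ : Fintype Q]
  trans : Q → Option D → Option A → Option D → Move → Q → Prop
  init : Q
  final : Set Q

attribute [instance] RTM.instQ

/-- The transition system `T(M)` associated with an RTM `M`. -/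
def RTM.lts {A D : Type} (M : RTM A D) : LTS A where
  State := M.Q × Tape D
  tr c a c' := ∃ e m, M.trans c.1 c.2.head a e m c'.1 ∧ c'.2 = c.2.writeMove e m
  init := (M.init, Tape.empty D)
  final := {c | c.1 ∈ M.final}

def RTM.Deterministic {A D : Type} (M : RTM A D) : Prop :=
  (∀ s d a e₁ m₁ t₁ e₂ m₂ t₂, M.trans s d a e₁ m₁ t₁ → M.trans s d a e₂ m₂ t₂ →
      e₁ = e₂ ∧ m₁ = m₂ ∧ t₁ = t₂) ∧
  (∀ s d e₁ m₁ t₁, M.trans s d none e₁ m₁ t₁ →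
      ∀ a e₂ m₂ t₂, M.trans s d a e₂ m₂ t₂ → a = none)

/-! ## Actions over channels, and parallel composition -/

/-- Actions over a set `C` of channels with communicated values in `V`,
together with further (base) actions from `B`:  `recv c v` is `c?v`,
`send c v` is `c!v`. -/
inductive CAct (C V B : Type) : Type
  | recv : C → V → CAct C V B
  | send : C → V → CAct C V B
  | base : B → CAct C V B
deriving DecidableEq

/-- The (possibly silent) action `a` is a communication action on one of the
channels in `C'`. -/
def IsComm {C V B : Type} (C' : Set C) : Option (CAct C V B) → Prop
  | some (.recv c _) => c ∈ C'
  | some (.send c _) => c ∈ C'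
  | _ => False

/-- Parallel composition `[T₁ ∥ T₂]_{C'}` of transition systems, enforcing
communication on the channels in `C'`. -/
def parLTS {C V B : Type} (C' : Set C) (T₁ T₂ : LTS (CAct C V B)) :
    LTS (CAct C V B) where
  State := T₁.State × T₂.State
  init := (T₁.init, T₂.init)
  final := {p | p.1 ∈ T₁.final ∧ p.2 ∈ T₂.final}
  tr p a p' :=
    ¬ IsComm C' a ∧
    ((T₁.tr p.1 a p'.1 ∧ p.2 = p'.2) ∨
     (T₂.tr p.2 a p'.2 ∧ p.1 = p'.1) ∨
     (a = none ∧ ∃ c ∈ C', ∃ d : V,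
        (T₁.tr p.1 (some (.send c d)) p'.1 ∧ T₂.tr p.2 (some (.recv c d)) p'.2) ∨
        (T₁.tr p.1 (some (.recv c d)) p'.1 ∧ T₂.tr p.2 (some (.send c d)) p'.2)))

/-- The behaviour of `sender(M)`: output the symbols of `w` one by one along
channel `cu`, then halt in a final state. -/
def outputLTS {C V B : Type} (cu : C) (w : List V) : LTS (CAct C V B) where
  State := List V
  tr s a t := ∃ d, s = d :: t ∧ a = some (.send cu d)
  init := w
  final := {([] : List V)}

/-- A concrete (syntactic, Gödel-numberable) presentation of a reactive Turing
machine: states are `Fin (n+1)`, and the transition relation is a finite set of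
tuples. -/
structure RTMc (A D : Type) where
  n : ℕ
  trans : Finset (Fin (n + 1) × Option D × Option A × Option D × Move × Fin (n + 1))
  init : Fin (n + 1)
  final : Finset (Fin (n + 1))

def RTMc.toRTM {A D : Type} (M : RTMc A D) : RTM A D where
  Q := Fin (M.n + 1)
  trans s d a e m t := (s, d, a, e, m, t) ∈ M.trans
  init := M.init
  final := (↑M.final : Set (Fin (M.n + 1)))

end RTMPaper

namespace RTMPaper

/-! ## A process calculus (TCP_τ without sequential composition) -/

/-- Process expressions: deadlock `0`, skip `1`, action prefix, alternative
composition, parallel composition (enforcing communication on a set of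
channels), and names. -/
inductive PExp (C V B N : Type) : Type
  | dl : PExp C V B N
  | emp : PExp C V B N
  | pref : Option (CAct C V B) → PExp C V B N → PExp C V B N
  | alt : PExp C V B N → PExp C V B N → PExp C V B N
  | par : Set C → PExp C V B N → PExp C V B N → PExp C V B N
  | name : N → PExp C V B N

namespace PExp

def names {C V B N : Type} : PExp C V B N → Set N
  | .dl => ∅
  | .emp => ∅
  | .pref _ p => p.names
  | .alt p q => p.names ∪ q.names
  | .par _ p q => p.names ∪ q.names
  | .name n => {n}

def mapNames {C V B N N' : Type} (f : N → N') : PExp C V B N → PExp C V B N'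
  | .dl => .dl
  | .emp => .emp
  | .pref a p => .pref a (p.mapNames f)
  | .alt p q => .alt (p.mapNames f) (q.mapNames f)
  | .par C' p q => .par C' (p.mapNames f) (q.mapNames f)
  | .name n => .name (f n)

end PExp

/-- A recursive specification over the names `N` is a partial map from names to
process expressions (the defining equations). -/
def SpecWF {C V B N : Type} (E : N → Option (PExp C V B N)) : Prop :=
  ∀ n p, E n = some p → ∀ m ∈ PExp.names p, (E m).isSome

/-- All names occurring in `p` have a defining equation in `E`. -/
def DefinedIn {C V B N : Type} (E : N → Option (PExp C V B N))
    (p : PExp C V B N) : Prop :=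
  ∀ m ∈ PExp.names p, (E m).isSome

/-- The termination predicate `↓` of the structural operational semantics. -/
inductive Term {C V B N : Type} (E : N → Option (PExp C V B N)) :
    PExp C V B N → Prop
  | emp : Term E .emp
  | altL {p q} : Term E p → Term E (.alt p q)
  | altR {p q} : Term E q → Term E (.alt p q)
  | par {C' p q} : Term E p → Term E q → Term E (.par C' p q)
  | name {n p} : E n = some p → Term E p → Term E (.name n)

/-- The transition relation of the structural operational semantics. -/
inductive Step {C V B N : Type} (E : N → Option (PExp C V B N)) :
    PExp C V B N → Option (CAct C V B) → PExp C V B N → Prop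
  | pref {a p} : Step E (.pref a p) a p
  | altL {p q a p'} : Step E p a p' → Step E (.alt p q) a p'
  | altR {p q a q'} : Step E q a q' → Step E (.alt p q) a q'
  | parL {C' p q a p'} : Step E p a p' → ¬ IsComm C' a →
      Step E (.par C' p q) a (.par C' p' q)
  | parR {C' p q a q'} : Step E q a q' → ¬ IsComm C' a →
      Step E (.par C' p q) a (.par C' p q')
  | syncSR {C' : Set C} {p q p' q' c d} : c ∈ C' →
      Step E p (some (.send c d)) p' → Step E q (some (.recv c d)) q' →
      Step E (.par C' p q) none (.par C' p' q')
  | syncRS {C' : Set C} {p q p' q' c d} : c ∈ C' →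
      Step E p (some (.recv c d)) p' → Step E q (some (.send c d)) q' →
      Step E (.par C' p q) none (.par C' p' q')
  | name {n p a p'} : E n = some p → Step E p a p' → Step E (.name n) a p'

/-- The process expressions reachable from `p` under the semantics of `E`. -/
def Reach {C V B N : Type} (E : N → Option (PExp C V B N))
    (p : PExp C V B N) : Set (PExp C V B N) :=
  {q | Relation.ReflTransGen (fun x y => ∃ a, Step E x a y) p q}

/-- The transition system `T_E(p)` associated with the process expression `p`
and the recursive specification `E`. -/
def pLTS {C V B N : Type} (E : N → Option (PExp C V B N))
    (p : PExp C V B N) : LTS (CAct C V B) where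
  State := {q // q ∈ Reach E p}
  tr s a t := Step E s.1 a t.1
  init := ⟨p, Relation.ReflTransGen.refl⟩
  final := {s | Term E s.1}

/-- A deterministic internal computation from `s` to `s'` with respect to a
transition relation `tr`. -/
def DetInternalComp {S A : Type} (tr : S → Option A → S → Prop)
    (s s' : S) : Prop :=
  ∃ (n : ℕ) (f : ℕ → S), f 0 = s ∧ f n = s' ∧
    (∀ i < n, tr (f i) none (f (i + 1))) ∧
    (∀ i < n, ∀ a u, tr (f i) a u → a = none ∧ u = f (i + 1))

/-! ### Finite sums of process expressions -/

def bigAlt {C V B N : Type} (l : List (PExp C V B N)) : PExp C V B N :=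
  l.foldr PExp.alt PExp.dl

/-- `Σ_{x ∈ l} f x`. -/
def sumList {C V B N ι : Type} (l : List ι) (f : ι → PExp C V B N) :
    PExp C V B N :=
  bigAlt (l.map f)

/-- The list of all elements of a finite type. -/
noncomputable def allOf (ι : Type) [Fintype ι] : List ι := Finset.univ.toList

/-- The disjoint union of two recursive specifications. -/
def combineSpec {C V B N₁ N₂ : Type}
    (E₁ : N₁ → Option (PExp C V B N₁)) (E₂ : N₂ → Option (PExp C V B N₂)) :
    N₁ ⊕ N₂ → Option (PExp C V B (N₁ ⊕ N₂))
  | .inl n => (E₁ n).map (PExp.mapNames Sum.inl)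
  | .inr n => (E₂ n).map (PExp.mapNames Sum.inr)

/-! ### Queue specifications -/

/-- The infinite specification `E∞Q` of a FIFO queue over the alphabet `al`
with input channel `ci` and output channel `co`; the name of a state of the
queue is its contents (a string, insertion at the left, removal at the
right). -/
def infQueueSpec (C B V : Type) (al : List V) (ci co : C) :
    List V → Option (PExp C V B (List V)) := fun l =>
  some <|
    match l.getLast? with
    | none =>
        .alt (sumList al fun d => .pref (some (.recv ci d)) (.name [d])) .emp
    | some d =>
        .alt (.alt (.pref (some (.send co d)) (.name l.dropLast))
          (sumList al fun e => .pref (some (.recv ci e)) (.name (e :: l)))) .emp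

/-- The finite Bergstra–Klop queue specification `EQ` (with added `1`-summands):
for channels `(j,k,p)`,
`Q^{jk}_p ≝ Σ_d j?d.[ Q^{jp}_k ∥ (1 + k!d.Q^{pk}_j) ]_{{p}} + 1`. -/
def bkQueueSpec (C B V : Type) (al : List V) :
    C × C × C → Option (PExp C V B (C × C × C)) := fun jkp =>
  some <| .alt
    (sumList al fun d => .pref (some (.recv jkp.1 d))
      (.par {jkp.2.2} (.name (jkp.1, jkp.2.2, jkp.2.1))
        (.alt .emp (.pref (some (.send jkp.2.1 d)) (.name (jkp.2.2, jkp.2.1, jkp.1))))))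
    .emp

/-! ### Tape specifications -/

/-- Symbols communicated in the tape/queue specifications: tape symbols
(`dat d` for `d ∈ D□`), the fresh symbols `⊥` and `$`, and the move
instructions `L` and `R`. -/
inductive Sym (D : Type) : Type
  | dat : Option D → Sym D
  | bot : Sym D
  | dollar : Sym D
  | mvL : Sym D
  | mvR : Sym D
deriving DecidableEq

instance {D : Type} [Fintype D] [DecidableEq D] : Fintype (Sym D) where
  elems := ((Finset.univ : Finset (Option D)).image Sym.dat) ∪
    {Sym.bot, Sym.dollar, Sym.mvL, Sym.mvR}
  complete := by intro x; cases x <;> simp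

/-- The queue alphabet `D□ ∪ {⊥, $}`. -/
noncomputable def qAlphList (D : Type) [Fintype D] [DecidableEq D] : List (Sym D) :=
  ((Finset.univ : Finset (Sym D)).filter fun v => v ≠ Sym.mvL ∧ v ≠ Sym.mvR).toList

def dmap {D : Type} (l : List (Option D)) : List (Sym D) := l.map Sym.dat

def movSym {D : Type} : Move → Sym D
  | .L => .mvL
  | .R => .mvR

/-- Names of the finite tape-controller specification `ET`. -/
inductive TName (D : Type) : Type
  | H : Option D → TName D
  | HL : Option D → TName D
  | HR : Option D → TName D
  | Back : TName D
  | Fwd : Option D → TName D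
  | FwdBot : TName D

/-- The finite tape-controller specification `ET`, with read channel `cr`,
write channel `cw`, move channel `cm`, and a queue interface on channels
`ci` (insert) and `co` (remove). -/
noncomputable def tapeCtrlSpec (C D B : Type) [Fintype D] (ci co cr cw cm : C) :
    TName D → Option (PExp C (Sym D) B (TName D))
  | .H d => some <| .alt (.alt (.alt (.alt
      (.pref (some (.send cr (.dat d))) (.name (.H d)))
      (sumList (allOf (Option D)) fun e =>
        .pref (some (.recv cw (.dat e))) (.name (.H e))))
      (.pref (some (.recv cm .mvL)) (.name (.HL d))))
      (.pref (some (.recv cm .mvR)) (.name (.HR d))))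
      .emp
  | .HL d => some <| .pref (some (.send ci (.dat d)))
      (.alt (sumList (allOf (Option D)) fun e =>
          .pref (some (.recv co (.dat e))) (.name (.H e)))
        (.pref (some (.recv co .bot))
          (.pref (some (.send ci .dollar))
            (.pref (some (.send ci .bot)) (.name .Back)))))
  | .Back => some <| .alt
      (sumList (allOf (Option D)) fun d =>
        .pref (some (.recv co (.dat d)))
          (.pref (some (.send ci (.dat d))) (.name .Back)))
      (.pref (some (.recv co .dollar)) (.name (.H none)))
  | .HR d => some <| .pref (some (.send ci .dollar))
      (.pref (some (.send ci (.dat d)))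
        (.alt (sumList (allOf (Option D)) fun e =>
            .pref (some (.recv co (.dat e))) (.name (.Fwd e)))
          (.pref (some (.recv co .bot)) (.name .FwdBot))))
  | .Fwd d => some <| .alt (.alt
      (sumList (allOf (Option D)) fun e =>
        .pref (some (.recv co (.dat e)))
          (.pref (some (.send ci (.dat d))) (.name (.Fwd e))))
      (.pref (some (.recv co .bot))
        (.pref (some (.send ci (.dat d))) (.name .FwdBot))))
      (.pref (some (.recv co .dollar)) (.name (.H d)))
  | .FwdBot => some <| .alt
      (sumList (allOf (Option D)) fun e =>
        .pref (some (.recv co (.dat e)))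
          (.pref (some (.send ci .bot)) (.name (.Fwd e))))
      (.pref (some (.recv co .dollar))
        (.pref (some (.send ci .bot)) (.name (.H none))))

/-- The infinite tape specification `E∞T`: one name for every tape instance,
with read channel `cr`, write channel `cw` and move channel `cm`. -/
noncomputable def infTapeSpec (C B D : Type) [Fintype D] (cr cw cm : C) :
    Tape D → Option (PExp C (Sym D) B (Tape D)) := fun t =>
  some <| .alt (.alt (.alt (.alt
    (.pref (some (.send cr (.dat t.head))) (.name t))
    (sumList (allOf (Option D)) fun e =>
      .pref (some (.recv cw (.dat e))) (.name ⟨t.left, e, t.right⟩)))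
    (.pref (some (.recv cm .mvL)) (.name (t.writeMove t.head .L))))
    (.pref (some (.recv cm .mvR)) (.name (t.writeMove t.head .R))))
    .emp

/-- The finite-control specification `Efc` of an RTM `M`:
`C_{s,d} ≝ Σ_{(s,d,a,e,Mv,t) ∈ →} a.w!e.m!Mv.Σ_{f∈D□} r?f.C_{t,f}`,
with an additional summand `1` iff `s` is a final state of `M`. -/
noncomputable def fcSpec {C D B : Type} [Fintype D] [Fintype B]
    (M : RTM B D) (cr cw cm : C) :
    M.Q × Option D → Option (PExp C (Sym D) B (M.Q × Option D)) := fun sd =>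
  let base : PExp C (Sym D) B (M.Q × Option D) :=
    bigAlt ((((Set.toFinite {x : Option B × Option D × Move × M.Q |
        M.trans sd.1 sd.2 x.1 x.2.1 x.2.2.1 x.2.2.2}).toFinset).toList).map fun x =>
      .pref (Option.map CAct.base x.1)
        (.pref (some (.send cw (.dat x.2.1)))
          (.pref (some (.send cm (movSym x.2.2.1)))
            (sumList (allOf (Option D)) fun f =>
              .pref (some (.recv cr (.dat f))) (.name (x.2.2.2, f))))))
  haveI := Classical.propDecidable (sd.1 ∈ M.final)
  some (if sd.1 ∈ M.final then .alt base .emp else base)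

end RTMPaper

namespace RTMPaper

/-- The tape-controller specification combined with the infinite queue
specification (over the queue alphabet `D□ ∪ {⊥, $}`). -/
noncomputable def EdTQ (C D B : Type) [Fintype D] [DecidableEq D]
    (ci co cr cw cm : C) :
    (TName D ⊕ List (Sym D)) →
      Option (PExp C (Sym D) B (TName D ⊕ List (Sym D))) :=
  combineSpec (tapeCtrlSpec C D B ci co cr cw cm)
    (infQueueSpec C B (Sym D) (qAlphList D) ci co)


/-! ### Auxiliary: a generic criterion for ≈Δb -/

section Generic

variable {A : Type} {T₁ T₂ : LTS A}

/-- A generic criterion for divergence-preserving branching bisimilarity: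
an indexed relation whose non-stable right-hand states have a unique
(index-decreasing) τ-successor, and whose stable right-hand states match the
left-hand states exactly. -/
theorem dpbb_of_indexed (Rn : ℕ → T₁.State → T₂.State → Prop)
    (stable : T₂.State → Prop)
    (hτ₁ : ∀ {n s₁ s₂}, Rn n s₁ s₂ → ∀ t, ¬ T₁.tr s₁ none t)
    (hfin₁ : ∀ {n s₁ s₂}, Rn n s₁ s₂ → s₁ ∈ T₁.final)
    (hU : ∀ {n s₁ s₂}, Rn n s₁ s₂ → ¬ stable s₂ →
      s₂ ∉ T₂.final ∧ ∃ s₂' m, m < n ∧ T₂.tr s₂ none s₂' ∧ Rn m s₁ s₂' ∧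
        ∀ a t, T₂.tr s₂ a t → a = none ∧ t = s₂')
    (hS : ∀ {n s₁ s₂}, Rn n s₁ s₂ → stable s₂ →
      (∀ a t, T₂.tr s₂ a t → ∃ t₁ m, T₁.tr s₁ a t₁ ∧ Rn m t₁ t) ∧
      (∀ a t₁, T₁.tr s₁ a t₁ → ∃ t m, T₂.tr s₂ a t ∧ Rn m t₁ t) ∧
      s₂ ∈ T₂.final)
    (hinit : ∃ n, Rn n T₁.init T₂.init) :
    DPBranchingBisimilar T₁ T₂ := by
  -- from any related pair we can τ-reach a stable related state
  have reach : ∀ n s₁ s₂, Rn n s₁ s₂ →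
      ∃ s₂' m, T₂.tauReach s₂ s₂' ∧ Rn m s₁ s₂' ∧ stable s₂' := by
    intro n
    induction n using Nat.strong_induction_on with
    | _ n ih =>
      intro s₁ s₂ h
      by_cases hst : stable s₂
      · exact ⟨s₂, n, Relation.ReflTransGen.refl, h, hst⟩
      · obtain ⟨-, s₂', m, hm, htr, hrel, -⟩ := hU h hst
        obtain ⟨s₂'', m', hreach, hrel', hst'⟩ := ih m hm s₁ s₂' hrel
        exact ⟨s₂'', m', Relation.ReflTransGen.head htr hreach, hrel', hst'⟩
  -- no infinite τ-chains on the right within the relation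
  have noDiv : ∀ n s₁ (f : ℕ → T₂.State), Rn n s₁ (f 0) →
      (∀ i, T₂.tauStep (f i) (f (i + 1))) → False := by
    intro n
    induction n using Nat.strong_induction_on with
    | _ n ih =>
      intro s₁ f h hch
      by_cases hst : stable (f 0)
      · obtain ⟨t₁, m, htr, -⟩ := (hS h hst).1 none (f 1) (hch 0)
        exact hτ₁ h t₁ htr
      · obtain ⟨-, s₂', m, hm, htr, hrel, huniq⟩ := hU h hst
        obtain ⟨-, heq⟩ := huniq none (f 1) (hch 0)
        exact ih m hm s₁ (fun i => f (i + 1)) (show Rn m s₁ (f 1) from heq ▸ hrel) (fun i => hch (i + 1))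
  refine ⟨fun s₁ s₂ => ∃ n, Rn n s₁ s₂, ⟨?_, ?_, ?_, ?_⟩, ⟨?_, ?_⟩, hinit⟩
  · -- fwd
    rintro s₁ s₂ a s₁' ⟨n, h⟩ htr
    obtain ⟨s₂'', m, hreach, hrel, hst⟩ := reach n s₁ s₂ h
    obtain ⟨t, m', htr', hrel'⟩ := (hS hrel hst).2.1 a s₁' htr
    exact ⟨s₂'', t, hreach, Or.inl htr', ⟨m, hrel⟩, ⟨m', hrel'⟩⟩
  · -- bwd
    rintro s₁ s₂ a s₂' ⟨n, h⟩ htr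
    by_cases hst : stable s₂
    · obtain ⟨t₁, m, htr', hrel'⟩ := (hS h hst).1 a s₂' htr
      exact ⟨s₁, t₁, Relation.ReflTransGen.refl, Or.inl htr', ⟨n, h⟩, ⟨m, hrel'⟩⟩
    · obtain ⟨-, t, m, hm, htr₀, hrel, huniq⟩ := hU h hst
      obtain ⟨ha, heq⟩ := huniq a s₂' htr
      exact ⟨s₁, s₁, Relation.ReflTransGen.refl, Or.inr ⟨ha, rfl⟩, ⟨n, h⟩,
        ⟨m, heq ▸ hrel⟩⟩
  · -- finFwd
    rintro s₁ s₂ ⟨n, h⟩ hf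
    obtain ⟨s₂', m, hreach, hrel, hst⟩ := reach n s₁ s₂ h
    exact ⟨s₂', hreach, ⟨m, hrel⟩, (hS hrel hst).2.2⟩
  · -- finBwd
    rintro s₁ s₂ ⟨n, h⟩ hf
    by_cases hst : stable s₂
    · exact ⟨s₁, Relation.ReflTransGen.refl, ⟨n, h⟩, hfin₁ h⟩
    · exact absurd hf (hU h hst).1
  · -- divergence fwd
    rintro s₂ f hch hrel
    obtain ⟨n, h⟩ := hrel 0
    exact absurd (hch 0) (hτ₁ h (f 1))
  · -- divergence bwd
    rintro s₁ f hch hrel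
    obtain ⟨n, h⟩ := hrel 0
    exact absurd (noDiv n s₁ f h hch) not_false

end Generic


/-! ### Auxiliary: basic facts about the operational semantics -/

section StepLemmas

variable {C V B N : Type} {E : N → Option (PExp C V B N)}

lemma step_dl {a p'} : ¬ Step E .dl a p' := fun h => by cases h

lemma step_emp {a p'} : ¬ Step E .emp a p' := fun h => by cases h

@[simp] lemma step_emp_iff {a p'} : Step E (.emp : PExp C V B N) a p' ↔ False :=
  ⟨step_emp, False.elim⟩

lemma step_pref {b p a p'} : Step E (.pref b p) a p' ↔ (a = b ∧ p' = p) := by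
  constructor
  · rintro h; cases h; exact ⟨rfl, rfl⟩
  · rintro ⟨rfl, rfl⟩; exact Step.pref

lemma step_alt {p q a r} : Step E (.alt p q) a r ↔ Step E p a r ∨ Step E q a r := by
  constructor
  · rintro h; cases h with
    | altL h => exact Or.inl h
    | altR h => exact Or.inr h
  · rintro (h | h)
    · exact Step.altL h
    · exact Step.altR h

lemma step_name {n p a p'} (h : E n = some p) :
    Step E (.name n) a p' ↔ Step E p a p' := by
  constructor
  · rintro hs; cases hs with
    | name h' hs => rw [h] at h'; cases h'; exact hs
  · exact Step.name h

lemma step_bigAlt {L : List (PExp C V B N)} {a p'} :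
    Step E (bigAlt L) a p' ↔ ∃ q ∈ L, Step E q a p' := by
  induction L with
  | nil => simp only [bigAlt, List.foldr_nil]; simp [step_dl]
  | cons q L ih =>
    simp only [bigAlt, List.foldr_cons] at ih ⊢
    simp [step_alt, ih]

lemma step_sumList {ι : Type} {l : List ι} {f : ι → PExp C V B N} {a p'} :
    Step E (sumList l f) a p' ↔ ∃ x ∈ l, Step E (f x) a p' := by
  simp [sumList, step_bigAlt]

lemma term_pref {b p} : ¬ Term E (.pref b p) := fun h => by cases h

lemma term_dl : ¬ Term E (.dl : PExp C V B N) := fun h => by cases h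

lemma term_alt {p q} : Term E (.alt p q) ↔ Term E p ∨ Term E q := by
  constructor
  · rintro h; cases h with
    | altL h => exact Or.inl h
    | altR h => exact Or.inr h
  · rintro (h | h)
    · exact Term.altL h
    · exact Term.altR h

lemma term_name {n p} (h : E n = some p) : Term E (.name n) ↔ Term E p := by
  constructor
  · rintro hs; cases hs with
    | name h' hs => rw [h] at h'; cases h'; exact hs
  · exact Term.name h

lemma term_par {C' p q} : Term E (.par C' p q) ↔ Term E p ∧ Term E q := by
  constructor
  · rintro h; cases h with
    | par h1 h2 => exact ⟨h1, h2⟩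
  · rintro ⟨h1, h2⟩; exact Term.par h1 h2

lemma term_sumList {ι : Type} {l : List ι} {g : ι → Option (CAct C V B)}
    {f : ι → PExp C V B N} : ¬ Term E (sumList l fun x => .pref (g x) (f x)) := by
  induction l with
  | nil => simp [sumList, bigAlt, term_dl]
  | cons x l ih =>
    simp only [sumList, bigAlt, List.map_cons, List.foldr_cons, term_alt]
    rintro (h | h)
    · exact term_pref h
    · exact ih h

lemma step_par_iff {C' : Set C} {p q : PExp C V B N} {a r} :
    Step E (.par C' p q) a r ↔
      (∃ p', Step E p a p' ∧ ¬ IsComm C' a ∧ r = .par C' p' q) ∨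
      (∃ q', Step E q a q' ∧ ¬ IsComm C' a ∧ r = .par C' p q') ∨
      (∃ c ∈ C', ∃ d p' q', a = none ∧ r = .par C' p' q' ∧
        ((Step E p (some (.send c d)) p' ∧ Step E q (some (.recv c d)) q') ∨
         (Step E p (some (.recv c d)) p' ∧ Step E q (some (.send c d)) q'))) := by
  constructor
  · rintro h; cases h with
    | parL h hnc => exact Or.inl ⟨_, h, hnc, rfl⟩
    | parR h hnc => exact Or.inr (Or.inl ⟨_, h, hnc, rfl⟩)
    | syncSR hc h1 h2 => exact Or.inr (Or.inr ⟨_, hc, _, _, _, rfl, rfl, Or.inl ⟨h1, h2⟩⟩)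
    | syncRS hc h1 h2 => exact Or.inr (Or.inr ⟨_, hc, _, _, _, rfl, rfl, Or.inr ⟨h1, h2⟩⟩)
  · rintro (⟨p', h, hnc, rfl⟩ | ⟨q', h, hnc, rfl⟩ |
      ⟨c, hc, d, p', q', rfl, rfl, (⟨h1, h2⟩ | ⟨h1, h2⟩)⟩)
    · exact Step.parL h hnc
    · exact Step.parR h hnc
    · exact Step.syncSR hc h1 h2
    · exact Step.syncRS hc h1 h2

end StepLemmas

@[simp] lemma mem_allOf {ι : Type} [Fintype ι] (x : ι) : x ∈ allOf ι := by
  simp [allOf]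

lemma mapNames_bigAlt {C V B N N' : Type} (f : N → N') (L : List (PExp C V B N)) :
    (bigAlt L).mapNames f = bigAlt (L.map (PExp.mapNames f)) := by
  induction L with
  | nil => rfl
  | cons q L ih => simp [bigAlt, PExp.mapNames] at ih ⊢; exact ih

lemma mapNames_sumList {C V B N N' ι : Type} (f : N → N') (l : List ι)
    (g : ι → PExp C V B N) :
    (sumList l g).mapNames f = sumList l fun x => (g x).mapNames f := by
  simp [sumList, mapNames_bigAlt, List.map_map]; rfl

@[simp] lemma mem_qAlphList {D : Type} [Fintype D] [DecidableEq D] (v : Sym D) :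
    v ∈ qAlphList D ↔ (v ≠ .mvL ∧ v ≠ .mvR) := by
  simp [qAlphList]


/-! ### Auxiliary: the controller and queue states, and their transitions -/

@[simp] lemma isComm_recv {C V B : Type} {C' : Set C} {c : C} {v : V} :
    IsComm (B := B) C' (some (.recv c v)) ↔ c ∈ C' := Iff.rfl

@[simp] lemma isComm_send {C V B : Type} {C' : Set C} {c : C} {v : V} :
    IsComm (B := B) C' (some (.send c v)) ↔ c ∈ C' := Iff.rfl

@[simp] lemma isComm_none {C V B : Type} {C' : Set C} :
    ¬ IsComm (C := C) (V := V) (B := B) C' none := fun h => h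

section TapeProof

variable {C D B : Type} [Fintype D] [DecidableEq D]

/-- controller states (names) -/
def nH (d : Option D) : PExp C (Sym D) B (TName D ⊕ List (Sym D)) := .name (.inl (.H d))
def nHL (d : Option D) : PExp C (Sym D) B (TName D ⊕ List (Sym D)) := .name (.inl (.HL d))
def nBack : PExp C (Sym D) B (TName D ⊕ List (Sym D)) := .name (.inl .Back)
def nHR (d : Option D) : PExp C (Sym D) B (TName D ⊕ List (Sym D)) := .name (.inl (.HR d))
def nFwd (d : Option D) : PExp C (Sym D) B (TName D ⊕ List (Sym D)) := .name (.inl (.Fwd d))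
def nFwdBot : PExp C (Sym D) B (TName D ⊕ List (Sym D)) := .name (.inl .FwdBot)

def qname (l : List (Sym D)) : PExp C (Sym D) B (TName D ⊕ List (Sym D)) := .name (.inr l)

noncomputable def pAfterHL (ci co : C) : PExp C (Sym D) B (TName D ⊕ List (Sym D)) :=
  .alt (sumList (allOf (Option D)) fun e => .pref (some (.recv co (.dat e))) (nH e))
    (.pref (some (.recv co .bot))
      (.pref (some (.send ci .dollar)) (.pref (some (.send ci .bot)) nBack)))

noncomputable def pAfterHR (ci co : C) : PExp C (Sym D) B (TName D ⊕ List (Sym D)) :=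
  .alt (sumList (allOf (Option D)) fun e => .pref (some (.recv co (.dat e))) (nFwd e))
    (.pref (some (.recv co .bot)) nFwdBot)

variable (ci co cr cw cm : C)

lemma E2_H (d : Option D) :
    EdTQ C D B ci co cr cw cm (.inl (.H d)) = some (.alt (.alt (.alt (.alt
      (.pref (some (.send cr (.dat d))) (nH d))
      (sumList (allOf (Option D)) fun e => .pref (some (.recv cw (.dat e))) (nH e)))
      (.pref (some (.recv cm .mvL)) (nHL d)))
      (.pref (some (.recv cm .mvR)) (nHR d))) .emp) := by
  simp [EdTQ, combineSpec, tapeCtrlSpec, PExp.mapNames, mapNames_sumList, nH, nHL, nHR]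

lemma E2_HL (d : Option D) :
    EdTQ C D B ci co cr cw cm (.inl (.HL d)) =
      some (.pref (some (.send ci (.dat d))) (pAfterHL ci co)) := by
  simp [EdTQ, combineSpec, tapeCtrlSpec, PExp.mapNames, mapNames_sumList, nH, nBack, pAfterHL]

lemma E2_Back :
    EdTQ C D B ci co cr cw cm (.inl .Back) = some (.alt
      (sumList (allOf (Option D)) fun e =>
        .pref (some (.recv co (.dat e))) (.pref (some (.send ci (.dat e))) nBack))
      (.pref (some (.recv co .dollar)) (nH none))) := by
  simp [EdTQ, combineSpec, tapeCtrlSpec, PExp.mapNames, mapNames_sumList, nH, nBack]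

lemma E2_HR (d : Option D) :
    EdTQ C D B ci co cr cw cm (.inl (.HR d)) =
      some (.pref (some (.send ci .dollar))
        (.pref (some (.send ci (.dat d))) (pAfterHR ci co))) := by
  simp [EdTQ, combineSpec, tapeCtrlSpec, PExp.mapNames, mapNames_sumList, nFwd, nFwdBot, pAfterHR]

lemma E2_Fwd (d : Option D) :
    EdTQ C D B ci co cr cw cm (.inl (.Fwd d)) = some (.alt (.alt
      (sumList (allOf (Option D)) fun e =>
        .pref (some (.recv co (.dat e))) (.pref (some (.send ci (.dat d))) (nFwd e)))
      (.pref (some (.recv co .bot)) (.pref (some (.send ci (.dat d))) nFwdBot)))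
      (.pref (some (.recv co .dollar)) (nH d))) := by
  simp [EdTQ, combineSpec, tapeCtrlSpec, PExp.mapNames, mapNames_sumList, nH, nFwd, nFwdBot]

lemma E2_FwdBot :
    EdTQ C D B ci co cr cw cm (.inl .FwdBot) = some (.alt
      (sumList (allOf (Option D)) fun e =>
        .pref (some (.recv co (.dat e))) (.pref (some (.send ci .bot)) (nFwd e)))
      (.pref (some (.recv co .dollar)) (.pref (some (.send ci .bot)) (nH none)))) := by
  simp [EdTQ, combineSpec, tapeCtrlSpec, PExp.mapNames, mapNames_sumList, nH, nFwd]

lemma E2_Qnil :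
    EdTQ C D B ci co cr cw cm (.inr ([] : List (Sym D))) = some (.alt
      (sumList (qAlphList D) fun e => .pref (some (.recv ci e)) (qname [e])) .emp) := by
  simp [EdTQ, combineSpec, infQueueSpec, PExp.mapNames, mapNames_sumList, qname]

lemma E2_Qconcat (l : List (Sym D)) (e : Sym D) :
    EdTQ C D B ci co cr cw cm (.inr (l ++ [e])) = some (.alt (.alt
      (.pref (some (.send co e)) (qname l))
      (sumList (qAlphList D) fun f => .pref (some (.recv ci f)) (qname (f :: (l ++ [e])))))
      .emp) := by
  simp [EdTQ, combineSpec, infQueueSpec, PExp.mapNames, mapNames_sumList, qname,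
    List.getLast?_concat, List.dropLast_concat]

variable {a : Option (CAct C (Sym D) B)} {p' : PExp C (Sym D) B (TName D ⊕ List (Sym D))}

lemma step_queue {l : List (Sym D)} :
    Step (EdTQ C D B ci co cr cw cm) (qname l) a p' ↔
      (∃ f, (f ≠ .mvL ∧ f ≠ .mvR) ∧ a = some (.recv ci f) ∧ p' = qname (f :: l)) ∨
      (∃ l' e, l = l' ++ [e] ∧ a = some (.send co e) ∧ p' = qname l') := by
  rcases List.eq_nil_or_concat l with rfl | ⟨l', e, rfl⟩
  · rw [qname, step_name (E2_Qnil ci co cr cw cm)]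
    simp only [step_alt, step_sumList, mem_qAlphList, step_pref]
    constructor
    · rintro ((⟨f, hf, rfl, rfl⟩) | h)
      · exact Or.inl ⟨f, hf, rfl, rfl⟩
      · exact absurd h step_emp
    · rintro (⟨f, hf, rfl, rfl⟩ | ⟨l', e, he, -⟩)
      · exact Or.inl ⟨f, hf, rfl, rfl⟩
      · exact absurd he.symm (List.append_ne_nil_of_right_ne_nil l' (by simp))
  · simp only [List.concat_eq_append]
    rw [qname, step_name (E2_Qconcat ci co cr cw cm l' e)]
    simp only [step_alt, step_sumList, mem_qAlphList, step_pref]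
    constructor
    · rintro (((⟨rfl, rfl⟩) | ⟨f, hf, rfl, rfl⟩) | h)
      · exact Or.inr ⟨l', e, rfl, rfl, rfl⟩
      · exact Or.inl ⟨f, hf, rfl, rfl⟩
      · exact absurd h step_emp
    · rintro (⟨f, hf, rfl, rfl⟩ | ⟨l'', e', he, rfl, rfl⟩)
      · exact Or.inl (Or.inr ⟨f, hf, rfl, rfl⟩)
      · obtain ⟨rfl, rfl⟩ : l'' = l' ∧ e' = e := by
          constructor
          · have := congrArg List.dropLast he
            simpa using this.symm
          · have := congrArg List.getLast? he
            simpa [List.getLast?_concat] using this.symm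
        exact Or.inl (Or.inl ⟨rfl, rfl⟩)

lemma step_nH {d : Option D} :
    Step (EdTQ C D B ci co cr cw cm) (nH d) a p' ↔
      (a = some (.send cr (.dat d)) ∧ p' = nH d) ∨
      (∃ e, a = some (.recv cw (.dat e)) ∧ p' = nH e) ∨
      (a = some (.recv cm .mvL) ∧ p' = nHL d) ∨
      (a = some (.recv cm .mvR) ∧ p' = nHR d) := by
  rw [nH, step_name (E2_H ci co cr cw cm d)]
  simp only [step_alt, step_sumList, mem_allOf, step_pref, true_and, step_emp_iff,
    or_false, false_or, or_assoc, nH, nHL, nHR, nBack, nFwd, nFwdBot]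

lemma step_nHL {d : Option D} :
    Step (EdTQ C D B ci co cr cw cm) (nHL d) a p' ↔
      (a = some (.send ci (.dat d)) ∧ p' = pAfterHL ci co) := by
  rw [nHL, step_name (E2_HL ci co cr cw cm d), step_pref]

lemma step_pAfterHL :
    Step (EdTQ C D B ci co cr cw cm) (pAfterHL ci co) a p' ↔
      (∃ e, a = some (.recv co (.dat e)) ∧ p' = nH e) ∨
      (a = some (.recv co .bot) ∧
        p' = .pref (some (.send ci .dollar)) (.pref (some (.send ci .bot)) nBack)) := by
  rw [pAfterHL]
  simp only [step_alt, step_sumList, mem_allOf, step_pref, true_and, step_emp_iff,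
    or_false, false_or, or_assoc, nH, nHL, nHR, nBack, nFwd, nFwdBot]

lemma step_nBack :
    Step (EdTQ C D B ci co cr cw cm) nBack a p' ↔
      (∃ e, a = some (.recv co (.dat e)) ∧
        p' = .pref (some (.send ci (.dat e))) nBack) ∨
      (a = some (.recv co .dollar) ∧ p' = nH none) := by
  rw [nBack, step_name (E2_Back ci co cr cw cm)]
  simp only [step_alt, step_sumList, mem_allOf, step_pref, true_and, step_emp_iff,
    or_false, false_or, or_assoc, nH, nHL, nHR, nBack, nFwd, nFwdBot]

lemma step_nHR {d : Option D} :
    Step (EdTQ C D B ci co cr cw cm) (nHR d) a p' ↔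
      (a = some (.send ci .dollar) ∧
        p' = .pref (some (.send ci (.dat d))) (pAfterHR ci co)) := by
  rw [nHR, step_name (E2_HR ci co cr cw cm d), step_pref]

lemma step_pAfterHR :
    Step (EdTQ C D B ci co cr cw cm) (pAfterHR ci co) a p' ↔
      (∃ e, a = some (.recv co (.dat e)) ∧ p' = nFwd e) ∨
      (a = some (.recv co .bot) ∧ p' = nFwdBot) := by
  rw [pAfterHR]
  simp only [step_alt, step_sumList, mem_allOf, step_pref, true_and, step_emp_iff,
    or_false, false_or, or_assoc, nH, nHL, nHR, nBack, nFwd, nFwdBot]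

lemma step_nFwd {d : Option D} :
    Step (EdTQ C D B ci co cr cw cm) (nFwd d) a p' ↔
      (∃ e, a = some (.recv co (.dat e)) ∧
        p' = .pref (some (.send ci (.dat d))) (nFwd e)) ∨
      (a = some (.recv co .bot) ∧ p' = .pref (some (.send ci (.dat d))) nFwdBot) ∨
      (a = some (.recv co .dollar) ∧ p' = nH d) := by
  rw [nFwd, step_name (E2_Fwd ci co cr cw cm d)]
  simp only [step_alt, step_sumList, mem_allOf, step_pref, true_and, step_emp_iff,
    or_false, false_or, or_assoc, nH, nHL, nHR, nBack, nFwd, nFwdBot]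

lemma step_nFwdBot :
    Step (EdTQ C D B ci co cr cw cm) nFwdBot a p' ↔
      (∃ e, a = some (.recv co (.dat e)) ∧
        p' = .pref (some (.send ci .bot)) (nFwd e)) ∨
      (a = some (.recv co .dollar) ∧ p' = .pref (some (.send ci .bot)) (nH none)) := by
  rw [nFwdBot, step_name (E2_FwdBot ci co cr cw cm)]
  simp only [step_alt, step_sumList, mem_allOf, step_pref, true_and, step_emp_iff,
    or_false, false_or, or_assoc, nH, nHL, nHR, nBack, nFwd, nFwdBot]

end TapeProof


section TapeProof2

variable {C D B : Type} [Fintype D] [DecidableEq D] (ci co cr cw cm : C)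

/-- a controller/queue configuration -/
def cfg (c : PExp C (Sym D) B (TName D ⊕ List (Sym D))) (q : List (Sym D)) :
    PExp C (Sym D) B (TName D ⊕ List (Sym D)) :=
  .par {ci, co} c (qname q)

variable {a : Option (CAct C (Sym D) B)} {p' : PExp C (Sym D) B (TName D ⊕ List (Sym D))}

lemma step_cfg (hio : ci ≠ co) {c : PExp C (Sym D) B (TName D ⊕ List (Sym D))}
    {q : List (Sym D)} :
    Step (EdTQ C D B ci co cr cw cm) (cfg ci co c q) a p' ↔
      (∃ c', Step (EdTQ C D B ci co cr cw cm) c a c' ∧ ¬ IsComm {ci, co} a ∧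
        p' = cfg ci co c' q) ∨
      (∃ c' v, (v ≠ .mvL ∧ v ≠ .mvR) ∧
        Step (EdTQ C D B ci co cr cw cm) c (some (.send ci v)) c' ∧ a = none ∧
        p' = cfg ci co c' (v :: q)) ∨
      (∃ c' q' e, q = q' ++ [e] ∧
        Step (EdTQ C D B ci co cr cw cm) c (some (.recv co e)) c' ∧ a = none ∧
        p' = cfg ci co c' q') := by
  rw [cfg, step_par_iff]
  constructor
  · rintro (⟨c', h, hnc, rfl⟩ | ⟨q', h, hnc, rfl⟩ | ⟨ch, hch, v, c', q', rfl, rfl,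
      (⟨h1, h2⟩ | ⟨h1, h2⟩)⟩)
    · exact Or.inl ⟨c', h, hnc, rfl⟩
    · rcases (step_queue ci co cr cw cm).mp h with ⟨f, -, rfl, -⟩ | ⟨l', e, -, rfl, -⟩
      · exact absurd (by simp : IsComm (B := B) ({ci, co} : Set C) (some (.recv ci f))) hnc
      · exact absurd (by simp : IsComm (B := B) ({ci, co} : Set C) (some (.send co e))) hnc
    · -- controller sends, queue receives: channel must be ci
      rcases (step_queue ci co cr cw cm).mp h2 with ⟨f, hf, heq, rfl⟩ | ⟨l', e, -, heq, -⟩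
      · obtain ⟨rfl, rfl⟩ : ch = ci ∧ v = f := by
          cases heq; exact ⟨rfl, rfl⟩
        exact Or.inr (Or.inl ⟨c', v, hf, h1, rfl, rfl⟩)
      · cases heq
    · -- controller receives, queue sends: channel must be co
      rcases (step_queue ci co cr cw cm).mp h2 with ⟨f, hf, heq, rfl⟩ | ⟨l', e, rfl, heq, rfl⟩
      · cases heq
      · obtain ⟨rfl, rfl⟩ : ch = co ∧ v = e := by
          cases heq; exact ⟨rfl, rfl⟩
        exact Or.inr (Or.inr ⟨c', l', v, rfl, h1, rfl, rfl⟩)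
  · rintro (⟨c', h, hnc, rfl⟩ | ⟨c', v, hv, h, rfl, rfl⟩ | ⟨c', q', e, rfl, h, rfl, rfl⟩)
    · exact Or.inl ⟨c', h, hnc, rfl⟩
    · refine Or.inr (Or.inr ⟨ci, by simp, v, c', qname (v :: q), rfl, rfl, Or.inl ⟨h, ?_⟩⟩)
      exact (step_queue ci co cr cw cm).mpr (Or.inl ⟨v, hv, rfl, rfl⟩)
    · refine Or.inr (Or.inr ⟨co, by simp, e, c', qname q', rfl, rfl, Or.inr ⟨h, ?_⟩⟩)
      exact (step_queue ci co cr cw cm).mpr (Or.inr ⟨q', e, rfl, rfl, rfl⟩)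

/-- a configuration whose controller is a single send on `ci` has exactly one
transition: the communication with the queue. -/
lemma step_cfg_send (hio : ci ≠ co) {v : Sym D} (hv : v ≠ .mvL ∧ v ≠ .mvR)
    {k : PExp C (Sym D) B (TName D ⊕ List (Sym D))} {q : List (Sym D)} :
    Step (EdTQ C D B ci co cr cw cm) (cfg ci co (.pref (some (.send ci v)) k) q) a p' ↔
      (a = none ∧ p' = cfg ci co k (v :: q)) := by
  rw [step_cfg ci co cr cw cm hio]
  constructor
  · rintro (⟨c', h, hnc, rfl⟩ | ⟨c', v', hv', h, rfl, rfl⟩ | ⟨c', q', e, rfl, h, rfl, rfl⟩)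
    · obtain ⟨rfl, rfl⟩ := step_pref.mp h
      exact absurd (by simp) hnc
    · obtain ⟨heq, rfl⟩ := step_pref.mp h
      obtain ⟨rfl⟩ : v' = v := by cases heq; rfl
      exact ⟨rfl, rfl⟩
    · obtain ⟨heq, rfl⟩ := step_pref.mp h
      cases heq
  · rintro ⟨rfl, rfl⟩
    exact Or.inr (Or.inl ⟨k, v, hv, step_pref.mpr ⟨rfl, rfl⟩, rfl, rfl⟩)

/-- the queue is always final -/
lemma term_qname (l : List (Sym D)) : Term (EdTQ C D B ci co cr cw cm) (qname l) := by
  rcases List.eq_nil_or_concat l with rfl | ⟨l', e, rfl⟩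
  · exact Term.name (E2_Qnil ci co cr cw cm) (Term.altR Term.emp)
  · rw [List.concat_eq_append]
    exact Term.name (E2_Qconcat ci co cr cw cm l' e) (Term.altR Term.emp)

lemma term_cfg_H (d : Option D) (q : List (Sym D)) :
    Term (EdTQ C D B ci co cr cw cm) (cfg ci co (nH d) q) :=
  Term.par (Term.name (E2_H ci co cr cw cm d) (Term.altR Term.emp))
    (term_qname ci co cr cw cm q)

lemma term_pAfterHL : ¬ Term (EdTQ C D B ci co cr cw cm) (pAfterHL ci co) := by
  rw [pAfterHL, term_alt]
  rintro (h | h)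
  · exact term_sumList h
  · exact term_pref h

lemma term_pAfterHR : ¬ Term (EdTQ C D B ci co cr cw cm) (pAfterHR ci co) := by
  rw [pAfterHR, term_alt]
  rintro (h | h)
  · exact term_sumList h
  · exact term_pref h

lemma term_nHL (d : Option D) : ¬ Term (EdTQ C D B ci co cr cw cm) (nHL d) := by
  rw [nHL, term_name (E2_HL ci co cr cw cm d)]
  exact term_pref

lemma term_nHR (d : Option D) : ¬ Term (EdTQ C D B ci co cr cw cm) (nHR d) := by
  rw [nHR, term_name (E2_HR ci co cr cw cm d)]
  exact term_pref

lemma term_nBack : ¬ Term (EdTQ C D B ci co cr cw cm) (nBack (C := C) (B := B) (D := D)) := by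
  rw [nBack, term_name (E2_Back ci co cr cw cm), term_alt]
  rintro (h | h)
  · exact term_sumList h
  · exact term_pref h

lemma term_nFwd (d : Option D) : ¬ Term (EdTQ C D B ci co cr cw cm) (nFwd d) := by
  rw [nFwd, term_name (E2_Fwd ci co cr cw cm d), term_alt]
  rintro (h | h)
  · rw [term_alt] at h
    rcases h with h | h
    · exact term_sumList h
    · exact term_pref h
  · exact term_pref h

lemma term_nFwdBot : ¬ Term (EdTQ C D B ci co cr cw cm) (nFwdBot (C := C) (B := B) (D := D)) := by
  rw [nFwdBot, term_name (E2_FwdBot ci co cr cw cm), term_alt]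
  rintro (h | h)
  · exact term_sumList h
  · exact term_pref h

/-! ### The infinite tape specification -/

lemma E1_eq (t : Tape D) :
    infTapeSpec C B D cr cw cm t = some (.alt (.alt (.alt (.alt
      (.pref (some (.send cr (.dat t.head))) (.name t))
      (sumList (allOf (Option D)) fun e =>
        .pref (some (.recv cw (.dat e))) (.name ⟨t.left, e, t.right⟩)))
      (.pref (some (.recv cm .mvL)) (.name (t.writeMove t.head .L))))
      (.pref (some (.recv cm .mvR)) (.name (t.writeMove t.head .R))))
      .emp) := rfl

lemma step_tape {t : Tape D} {p₁ : PExp C (Sym D) B (Tape D)} :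
    Step (infTapeSpec C B D cr cw cm) (.name t) a p₁ ↔
      (a = some (.send cr (.dat t.head)) ∧ p₁ = .name t) ∨
      (∃ e, a = some (.recv cw (.dat e)) ∧ p₁ = .name ⟨t.left, e, t.right⟩) ∨
      (a = some (.recv cm .mvL) ∧ p₁ = .name (t.writeMove t.head .L)) ∨
      (a = some (.recv cm .mvR) ∧ p₁ = .name (t.writeMove t.head .R)) := by
  rw [step_name (E1_eq cr cw cm t)]
  simp only [step_alt, step_sumList, mem_allOf, step_pref, true_and, step_emp_iff,
    or_false, false_or, or_assoc]

lemma term_tape (t : Tape D) : Term (infTapeSpec C B D cr cw cm) (.name t) :=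
  Term.name (E1_eq cr cw cm t) (Term.altR Term.emp)

end TapeProof2


@[simp] lemma dmap_nil {D : Type} : dmap ([] : List (Option D)) = [] := rfl

@[simp] lemma dmap_cons {D : Type} (d : Option D) (l : List (Option D)) :
    dmap (d :: l) = Sym.dat d :: dmap l := rfl

@[simp] lemma dmap_append {D : Type} (l₁ l₂ : List (Option D)) :
    dmap (l₁ ++ l₂) = dmap l₁ ++ dmap l₂ := by simp [dmap]

@[simp] lemma dmap_reverse {D : Type} (l : List (Option D)) :
    dmap l.reverse = (dmap l).reverse := by simp [dmap]

section TapeProof3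

variable {C D B : Type} [Fintype D] [DecidableEq D] (ci co cr cw cm : C)

/-- The bisimulation relation: a tape instance is related to all configurations
of the controller/queue system on the deterministic internal path leading to
the stable configuration representing that tape instance.  The natural-number
index bounds the number of remaining internal steps. -/
inductive TR : ℕ → PExp C (Sym D) B (Tape D) →
    PExp C (Sym D) B (TName D ⊕ List (Sym D)) → Prop
  | stable (t : Tape D) :
      TR 0 (.name t) (cfg ci co (nH t.head) (dmap t.right ++ Sym.bot :: dmap t.left.reverse))
  | hl (d : Option D) (lft r : List (Option D)) :
      TR (2 * r.length + 7) (.name (Tape.writeMove ⟨lft, d, r⟩ d .L))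
        (cfg ci co (nHL d) (dmap r ++ Sym.bot :: dmap lft.reverse))
  | l2 (d : Option D) (lft r : List (Option D)) :
      TR (2 * r.length + 6) (.name (Tape.writeMove ⟨lft, d, r⟩ d .L))
        (cfg ci co (pAfterHL ci co) (Sym.dat d :: dmap r ++ Sym.bot :: dmap lft.reverse))
  | l3 (d : Option D) (r : List (Option D)) :
      TR (2 * r.length + 5) (.name ⟨[], none, d :: r⟩)
        (cfg ci co (.pref (some (.send ci .dollar)) (.pref (some (.send ci .bot)) nBack))
          (Sym.dat d :: dmap r))
  | l4 (d : Option D) (r : List (Option D)) :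
      TR (2 * r.length + 4) (.name ⟨[], none, d :: r⟩)
        (cfg ci co (.pref (some (.send ci .bot)) nBack) (Sym.dollar :: Sym.dat d :: dmap r))
  | back (d : Option D) (r u v : List (Option D)) (h : v ++ u = d :: r) :
      TR (2 * v.length + 1) (.name ⟨[], none, d :: r⟩)
        (cfg ci co nBack (dmap u ++ Sym.bot :: Sym.dollar :: dmap v))
  | backmid (d : Option D) (r u v : List (Option D)) (x : Option D)
      (h : v ++ x :: u = d :: r) :
      TR (2 * v.length + 2) (.name ⟨[], none, d :: r⟩)
        (cfg ci co (.pref (some (.send ci (.dat x))) nBack)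
          (dmap u ++ Sym.bot :: Sym.dollar :: dmap v))
  | hr (d : Option D) (lft r : List (Option D)) :
      TR (2 * lft.length + 2 * r.length + 8) (.name (Tape.writeMove ⟨lft, d, r⟩ d .R))
        (cfg ci co (nHR d) (dmap r ++ Sym.bot :: dmap lft.reverse))
  | hr2 (d : Option D) (lft r : List (Option D)) :
      TR (2 * lft.length + 2 * r.length + 7) (.name (Tape.writeMove ⟨lft, d, r⟩ d .R))
        (cfg ci co (.pref (some (.send ci (.dat d))) (pAfterHR ci co))
          (Sym.dollar :: dmap r ++ Sym.bot :: dmap lft.reverse))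
  | hr3 (d : Option D) (lft r : List (Option D)) :
      TR (2 * lft.length + 2 * r.length + 6) (.name (Tape.writeMove ⟨lft, d, r⟩ d .R))
        (cfg ci co (pAfterHR ci co)
          (Sym.dat d :: Sym.dollar :: dmap r ++ Sym.bot :: dmap lft.reverse))
  | fa1 (d : Option D) (lft r p : List (Option D)) (e : Option D) (s : List (Option D))
      (h : lft = p ++ e :: s) :
      TR (2 * s.length + 2 * r.length + 4) (.name (Tape.writeMove ⟨lft, d, r⟩ d .R))
        (cfg ci co (nFwd e)
          (dmap p.reverse ++ Sym.dat d :: Sym.dollar :: dmap r ++ Sym.bot :: dmap s.reverse))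
  | fa2 (d : Option D) (lft r p : List (Option D)) (e f : Option D) (s : List (Option D))
      (h : lft = p ++ e :: f :: s) :
      TR (2 * s.length + 2 * r.length + 5) (.name (Tape.writeMove ⟨lft, d, r⟩ d .R))
        (cfg ci co (.pref (some (.send ci (.dat e))) (nFwd f))
          (dmap p.reverse ++ Sym.dat d :: Sym.dollar :: dmap r ++ Sym.bot :: dmap s.reverse))
  | fa3 (d : Option D) (lft r p : List (Option D)) (e : Option D) (h : lft = p ++ [e]) :
      TR (2 * r.length + 3) (.name (Tape.writeMove ⟨lft, d, r⟩ d .R))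
        (cfg ci co (.pref (some (.send ci (.dat e))) nFwdBot)
          (dmap p.reverse ++ Sym.dat d :: Sym.dollar :: dmap r))
  | fb (d : Option D) (lft r : List (Option D)) :
      TR (2 * r.length + 2) (.name (Tape.writeMove ⟨lft, d, r⟩ d .R))
        (cfg ci co nFwdBot (dmap lft.reverse ++ Sym.dat d :: Sym.dollar :: dmap r))
  | fbend (d : Option D) (lft : List (Option D)) :
      TR 1 (.name (Tape.writeMove ⟨lft, d, []⟩ d .R))
        (cfg ci co (.pref (some (.send ci .bot)) (nH none)) (dmap lft.reverse ++ [Sym.dat d]))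
  | fc0 (d : Option D) (lft s : List (Option D)) (y : Option D) :
      TR (2 * s.length + 2) (.name (Tape.writeMove ⟨lft, d, s ++ [y]⟩ d .R))
        (cfg ci co (.pref (some (.send ci .bot)) (nFwd y))
          (dmap lft.reverse ++ Sym.dat d :: Sym.dollar :: dmap s))
  | fc1 (d : Option D) (lft r w : List (Option D)) (e : Option D) (s : List (Option D))
      (h : r = s ++ e :: w) :
      TR (2 * s.length + 1) (.name (Tape.writeMove ⟨lft, d, r⟩ d .R))
        (cfg ci co (nFwd e)
          (dmap w ++ Sym.bot :: dmap lft.reverse ++ Sym.dat d :: Sym.dollar :: dmap s))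
  | fc2 (d : Option D) (lft r w : List (Option D)) (e z : Option D) (s : List (Option D))
      (h : r = s ++ z :: e :: w) :
      TR (2 * s.length + 2) (.name (Tape.writeMove ⟨lft, d, r⟩ d .R))
        (cfg ci co (.pref (some (.send ci (.dat e))) (nFwd z))
          (dmap w ++ Sym.bot :: dmap lft.reverse ++ Sym.dat d :: Sym.dollar :: dmap s))

/-- the conclusion of the "unstable" condition -/
def hUconc (n : ℕ) (p₁ : PExp C (Sym D) B (Tape D))
    (p₂ : PExp C (Sym D) B (TName D ⊕ List (Sym D))) : Prop :=
  ¬ Term (EdTQ C D B ci co cr cw cm) p₂ ∧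
  ∃ p₂' m, m < n ∧ Step (EdTQ C D B ci co cr cw cm) p₂ none p₂' ∧ TR ci co m p₁ p₂' ∧
    ∀ a t, Step (EdTQ C D B ci co cr cw cm) p₂ a t → a = none ∧ t = p₂'

lemma concat_inj' {α : Type} {l₁ l₂ : List α} {x y : α} (h : l₁ ++ [x] = l₂ ++ [y]) :
    l₁ = l₂ ∧ x = y := by
  constructor
  · have := congrArg List.dropLast h
    simpa using this
  · have := congrArg List.getLast? h
    simpa [List.getLast?_concat] using this

variable {ci co cr cw cm}

lemma hU_of_send (hio : ci ≠ co) {c k : PExp C (Sym D) B (TName D ⊕ List (Sym D))}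
    {v : Sym D} (hv : v ≠ .mvL ∧ v ≠ .mvR)
    (hc : ∀ a c', Step (EdTQ C D B ci co cr cw cm) c a c' ↔
      (a = some (.send ci v) ∧ c' = k))
    (hnt : ¬ Term (EdTQ C D B ci co cr cw cm) c)
    {q : List (Sym D)} {p₁ : PExp C (Sym D) B (Tape D)} {n m : ℕ}
    (hrel : TR ci co m p₁ (cfg ci co k (v :: q))) (hm : m < n) :
    hUconc ci co cr cw cm n p₁ (cfg ci co c q) := by
  constructor
  · intro ht
    exact hnt (term_par.mp ht).1
  refine ⟨cfg ci co k (v :: q), m, hm, ?_, hrel, ?_⟩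
  · exact (step_cfg ci co cr cw cm hio).mpr
      (Or.inr (Or.inl ⟨k, v, hv, (hc _ _).mpr ⟨rfl, rfl⟩, rfl, rfl⟩))
  · intro a t ht
    rcases (step_cfg ci co cr cw cm hio).mp ht with
      ⟨c', h, hnc, rfl⟩ | ⟨c', v', hv', h, rfl, rfl⟩ | ⟨c', q', e, heq, h, rfl, rfl⟩
    · obtain ⟨rfl, rfl⟩ := (hc _ _).mp h
      exact absurd (by simp) hnc
    · obtain ⟨heq, rfl⟩ := (hc _ _).mp h
      obtain rfl : v' = v := by cases heq; rfl
      exact ⟨rfl, rfl⟩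
    · obtain ⟨heq', rfl⟩ := (hc _ _).mp h
      cases heq'

lemma hU_of_recv (hio : ci ≠ co) {c k : PExp C (Sym D) B (TName D ⊕ List (Sym D))}
    {e : Sym D}
    (hshape : ∀ {a c'}, Step (EdTQ C D B ci co cr cw cm) c a c' →
      ∃ f, a = some (.recv co f))
    (hstep : Step (EdTQ C D B ci co cr cw cm) c (some (.recv co e)) k)
    (huniq : ∀ c', Step (EdTQ C D B ci co cr cw cm) c (some (.recv co e)) c' → c' = k)
    (hnt : ¬ Term (EdTQ C D B ci co cr cw cm) c)
    {q : List (Sym D)} {p₁ : PExp C (Sym D) B (Tape D)} {n m : ℕ}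
    (hrel : TR ci co m p₁ (cfg ci co k q)) (hm : m < n) :
    hUconc ci co cr cw cm n p₁ (cfg ci co c (q ++ [e])) := by
  constructor
  · intro ht
    exact hnt (term_par.mp ht).1
  refine ⟨cfg ci co k q, m, hm, ?_, hrel, ?_⟩
  · exact (step_cfg ci co cr cw cm hio).mpr
      (Or.inr (Or.inr ⟨k, q, e, rfl, hstep, rfl, rfl⟩))
  · intro a t ht
    rcases (step_cfg ci co cr cw cm hio).mp ht with
      ⟨c', h, hnc, rfl⟩ | ⟨c', v', hv', h, rfl, rfl⟩ | ⟨c', q', e', heq, h, rfl, rfl⟩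
    · obtain ⟨f, rfl⟩ := hshape h
      exact absurd (by simp) hnc
    · obtain ⟨f, hf⟩ := hshape h
      cases hf
    · obtain ⟨rfl, rfl⟩ := concat_inj' heq.symm
      rw [huniq _ h]
      exact ⟨rfl, rfl⟩

lemma shape_pAfterHL {a : Option (CAct C (Sym D) B)} {c'} :
    Step (EdTQ C D B ci co cr cw cm) (pAfterHL ci co) a c' →
      ∃ f, a = some (.recv co f) := by
  intro h
  rcases (step_pAfterHL ci co cr cw cm).mp h with ⟨e, rfl, -⟩ | ⟨rfl, -⟩
  · exact ⟨_, rfl⟩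
  · exact ⟨_, rfl⟩

lemma shape_nBack {a : Option (CAct C (Sym D) B)} {c'} :
    Step (EdTQ C D B ci co cr cw cm) nBack a c' → ∃ f, a = some (.recv co f) := by
  intro h
  rcases (step_nBack ci co cr cw cm).mp h with ⟨e, rfl, -⟩ | ⟨rfl, -⟩
  · exact ⟨_, rfl⟩
  · exact ⟨_, rfl⟩

lemma shape_pAfterHR {a : Option (CAct C (Sym D) B)} {c'} :
    Step (EdTQ C D B ci co cr cw cm) (pAfterHR ci co) a c' →
      ∃ f, a = some (.recv co f) := by
  intro h
  rcases (step_pAfterHR ci co cr cw cm).mp h with ⟨e, rfl, -⟩ | ⟨rfl, -⟩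
  · exact ⟨_, rfl⟩
  · exact ⟨_, rfl⟩

lemma shape_nFwd {d : Option D} {a : Option (CAct C (Sym D) B)} {c'} :
    Step (EdTQ C D B ci co cr cw cm) (nFwd d) a c' → ∃ f, a = some (.recv co f) := by
  intro h
  rcases (step_nFwd ci co cr cw cm).mp h with ⟨e, rfl, -⟩ | ⟨rfl, -⟩ | ⟨rfl, -⟩
  · exact ⟨_, rfl⟩
  · exact ⟨_, rfl⟩
  · exact ⟨_, rfl⟩

lemma shape_nFwdBot {a : Option (CAct C (Sym D) B)} {c'} :
    Step (EdTQ C D B ci co cr cw cm) nFwdBot a c' → ∃ f, a = some (.recv co f) := by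
  intro h
  rcases (step_nFwdBot ci co cr cw cm).mp h with ⟨e, rfl, -⟩ | ⟨rfl, -⟩
  · exact ⟨_, rfl⟩
  · exact ⟨_, rfl⟩


/-- every non-stable related configuration has a unique transition, which is a
τ-transition decreasing the index -/
lemma TR_hU (hio : ci ≠ co) {n : ℕ} {p₁ : PExp C (Sym D) B (Tape D)}
    {p₂ : PExp C (Sym D) B (TName D ⊕ List (Sym D))} (h : TR ci co n p₁ p₂)
    (hns : ∀ d q, p₂ ≠ cfg ci co (nH d) q) :
    hUconc ci co cr cw cm n p₁ p₂ := by
  have hvdat : ∀ e : Option D, (Sym.dat e ≠ Sym.mvL ∧ Sym.dat e ≠ Sym.mvR) := by simp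
  have hvbot : ((Sym.bot : Sym D) ≠ Sym.mvL ∧ (Sym.bot : Sym D) ≠ Sym.mvR) := by simp
  have hvdlr : ((Sym.dollar : Sym D) ≠ Sym.mvL ∧ (Sym.dollar : Sym D) ≠ Sym.mvR) := by simp
  cases h with
  | stable t => exact absurd rfl (hns t.head _)
  | hl d lft r =>
    exact hU_of_send hio (hvdat d) (fun a c' => step_nHL ci co cr cw cm)
      (term_nHL ci co cr cw cm d) (TR.l2 d lft r) (by omega)
  | l2 d lft r =>
    cases lft with
    | nil =>
      have hq : Sym.dat d :: dmap r ++ Sym.bot :: dmap ([] : List (Option D)).reverse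
          = (Sym.dat d :: dmap r) ++ [Sym.bot] := by simp
      rw [hq]
      refine hU_of_recv hio shape_pAfterHL
        ((step_pAfterHL ci co cr cw cm).mpr (Or.inr ⟨rfl, rfl⟩)) ?_
        (term_pAfterHL ci co cr cw cm) (TR.l3 d r) (by omega)
      intro c' hc'
      rcases (step_pAfterHL ci co cr cw cm).mp hc' with ⟨e', he, h'⟩ | ⟨he, h'⟩ <;>
        simp_all
    | cons x l =>
      have hq : Sym.dat d :: dmap r ++ Sym.bot :: dmap (x :: l).reverse
          = (Sym.dat d :: dmap r ++ Sym.bot :: dmap l.reverse) ++ [Sym.dat x] := by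
        simp [dmap]
      rw [hq]
      refine hU_of_recv (m := 0) hio shape_pAfterHL
        ((step_pAfterHL ci co cr cw cm).mpr (Or.inl ⟨x, rfl, rfl⟩)) ?_
        (term_pAfterHL ci co cr cw cm) ?_ ?_
      · intro c' hc'
        rcases (step_pAfterHL ci co cr cw cm).mp hc' with ⟨e', he, h'⟩ | ⟨he, h'⟩ <;>
          simp_all [nH]
      · simpa [dmap, Tape.writeMove] using TR.stable (ci := ci) (co := co)
          (B := B) ⟨l, x, d :: r⟩
      · omega
  | l3 d r =>
    exact hU_of_send hio hvdlr (fun a c' => step_pref) term_pref (TR.l4 d r) (by omega)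
  | l4 d r =>
    refine hU_of_send (m := 2 * (d :: r).length + 1) hio hvbot (fun a c' => step_pref)
      term_pref ?_ ?_
    · simpa [dmap] using TR.back (ci := ci) (co := co) (B := B) d r [] (d :: r) (by simp)
    · simp only [List.length_append, List.length_cons, List.length_nil]; omega
  | back d r u v hveq =>
    rcases List.eq_nil_or_concat v with rfl | ⟨v', x, rfl⟩
    · simp only [List.nil_append] at hveq
      subst hveq
      have hq : dmap (d :: r) ++ Sym.bot :: Sym.dollar :: dmap ([] : List (Option D))
          = (dmap (d :: r) ++ [Sym.bot]) ++ [Sym.dollar] := by simp [dmap]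
      rw [hq]
      refine hU_of_recv (m := 0) hio shape_nBack
        ((step_nBack ci co cr cw cm).mpr (Or.inr ⟨rfl, rfl⟩)) ?_
        (term_nBack ci co cr cw cm) ?_ ?_
      · intro c' hc'
        rcases (step_nBack ci co cr cw cm).mp hc' with ⟨e', he, h'⟩ | ⟨he, h'⟩ <;>
          simp_all
      · simpa [dmap] using TR.stable (ci := ci) (co := co) (B := B) ⟨[], none, d :: r⟩
      · omega
    · rw [List.concat_eq_append] at hveq ⊢
      have hq : dmap u ++ Sym.bot :: Sym.dollar :: dmap (v' ++ [x])
          = (dmap u ++ Sym.bot :: Sym.dollar :: dmap v') ++ [Sym.dat x] := by simp [dmap]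
      rw [hq]
      refine hU_of_recv (m := 2 * v'.length + 2) hio shape_nBack
        ((step_nBack ci co cr cw cm).mpr (Or.inl ⟨x, rfl, rfl⟩)) ?_
        (term_nBack ci co cr cw cm) ?_ ?_
      · intro c' hc'
        rcases (step_nBack ci co cr cw cm).mp hc' with ⟨e', he, h'⟩ | ⟨he, h'⟩ <;>
          simp_all [nBack]
      · exact TR.backmid d r u v' x (by simpa using hveq)
      · simp only [List.length_append, List.length_cons, List.length_nil]; omega
  | backmid d r u v x hveq =>
    refine hU_of_send (m := 2 * v.length + 1) hio (hvdat x) (fun a c' => step_pref)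
      term_pref ?_ ?_
    · simpa [dmap] using TR.back (ci := ci) (co := co) (B := B) d r (x :: u) v hveq
    · omega
  | hr d lft r =>
    exact hU_of_send hio hvdlr (fun a c' => step_nHR ci co cr cw cm)
      (term_nHR ci co cr cw cm d) (TR.hr2 d lft r) (by omega)
  | hr2 d lft r =>
    exact hU_of_send hio (hvdat d) (fun a c' => step_pref) term_pref
      (TR.hr3 d lft r) (by omega)
  | hr3 d lft r =>
    cases lft with
    | nil =>
      have hq : Sym.dat d :: Sym.dollar :: dmap r ++ Sym.bot ::
            dmap ([] : List (Option D)).reverse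
          = (Sym.dat d :: Sym.dollar :: dmap r) ++ [Sym.bot] := by simp
      rw [hq]
      refine hU_of_recv (m := 2 * r.length + 2) hio shape_pAfterHR
        ((step_pAfterHR ci co cr cw cm).mpr (Or.inr ⟨rfl, rfl⟩)) ?_
        (term_pAfterHR ci co cr cw cm) ?_ ?_
      · intro c' hc'
        rcases (step_pAfterHR ci co cr cw cm).mp hc' with ⟨e', he, h'⟩ | ⟨he, h'⟩ <;>
          simp_all
      · simpa [dmap] using TR.fb (ci := ci) (co := co) (B := B) d [] r
      · omega
    | cons x l =>
      have hq : Sym.dat d :: Sym.dollar :: dmap r ++ Sym.bot :: dmap (x :: l).reverse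
          = (Sym.dat d :: Sym.dollar :: dmap r ++ Sym.bot :: dmap l.reverse)
            ++ [Sym.dat x] := by simp [dmap]
      rw [hq]
      refine hU_of_recv (m := 2 * l.length + 2 * r.length + 4) hio shape_pAfterHR
        ((step_pAfterHR ci co cr cw cm).mpr (Or.inl ⟨x, rfl, rfl⟩)) ?_
        (term_pAfterHR ci co cr cw cm) ?_ ?_
      · intro c' hc'
        rcases (step_pAfterHR ci co cr cw cm).mp hc' with ⟨e', he, h'⟩ | ⟨he, h'⟩ <;>
          simp_all [nFwd]
      · simpa [dmap] using TR.fa1 (ci := ci) (co := co) (B := B) d (x :: l) r [] x l rfl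
      · simp only [List.length_append, List.length_cons, List.length_nil]; omega
  | fa1 d lft r p e s hleq =>
    cases s with
    | nil =>
      have hq : dmap p.reverse ++ Sym.dat d :: Sym.dollar :: dmap r ++ Sym.bot ::
            dmap ([] : List (Option D)).reverse
          = (dmap p.reverse ++ Sym.dat d :: Sym.dollar :: dmap r) ++ [Sym.bot] := by simp
      rw [hq]
      refine hU_of_recv hio shape_nFwd
        ((step_nFwd ci co cr cw cm).mpr (Or.inr (Or.inl ⟨rfl, rfl⟩))) ?_
        (term_nFwd ci co cr cw cm e) (TR.fa3 d lft r p e hleq) (by omega)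
      intro c' hc'
      rcases (step_nFwd ci co cr cw cm).mp hc' with ⟨e', he, h'⟩ | ⟨he, h'⟩ | ⟨he, h'⟩ <;>
        simp_all
    | cons f s' =>
      have hq : dmap p.reverse ++ Sym.dat d :: Sym.dollar :: dmap r ++ Sym.bot ::
            dmap (f :: s').reverse
          = (dmap p.reverse ++ Sym.dat d :: Sym.dollar :: dmap r ++ Sym.bot ::
              dmap s'.reverse) ++ [Sym.dat f] := by simp [dmap]
      rw [hq]
      refine hU_of_recv hio shape_nFwd
        ((step_nFwd ci co cr cw cm).mpr (Or.inl ⟨f, rfl, rfl⟩)) ?_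
        (term_nFwd ci co cr cw cm e) (TR.fa2 d lft r p e f s' hleq) (by simp only [List.length_append, List.length_cons, List.length_nil]; omega)
      intro c' hc'
      rcases (step_nFwd ci co cr cw cm).mp hc' with ⟨e', he, h'⟩ | ⟨he, h'⟩ | ⟨he, h'⟩ <;>
        simp_all [nFwd]
  | fa2 d lft r p e f s hleq =>
    refine hU_of_send (m := 2 * s.length + 2 * r.length + 4) hio (hvdat e)
      (fun a c' => step_pref) term_pref ?_ ?_
    · simpa [dmap] using TR.fa1 (ci := ci) (co := co) (B := B) d lft r (p ++ [e]) f s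
        (by simpa using hleq)
    · omega
  | fa3 d lft r p e hleq =>
    subst hleq
    refine hU_of_send (m := 2 * r.length + 2) hio (hvdat e) (fun a c' => step_pref)
      term_pref ?_ ?_
    · simpa [dmap] using TR.fb (ci := ci) (co := co) (B := B) d (p ++ [e]) r
    · omega
  | fb d lft r =>
    rcases List.eq_nil_or_concat r with rfl | ⟨s, y, rfl⟩
    · have hq : dmap lft.reverse ++ Sym.dat d :: Sym.dollar :: dmap ([] : List (Option D))
          = (dmap lft.reverse ++ [Sym.dat d]) ++ [Sym.dollar] := by simp [dmap]
      rw [hq]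
      refine hU_of_recv hio shape_nFwdBot
        ((step_nFwdBot ci co cr cw cm).mpr (Or.inr ⟨rfl, rfl⟩)) ?_
        (term_nFwdBot ci co cr cw cm) (TR.fbend d lft) (by omega)
      intro c' hc'
      rcases (step_nFwdBot ci co cr cw cm).mp hc' with ⟨e', he, h'⟩ | ⟨he, h'⟩ <;>
        simp_all
    · rw [List.concat_eq_append]
      have hq : dmap lft.reverse ++ Sym.dat d :: Sym.dollar :: dmap (s ++ [y])
          = (dmap lft.reverse ++ Sym.dat d :: Sym.dollar :: dmap s) ++ [Sym.dat y] := by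
        simp [dmap]
      rw [hq]
      refine hU_of_recv hio shape_nFwdBot
        ((step_nFwdBot ci co cr cw cm).mpr (Or.inl ⟨y, rfl, rfl⟩)) ?_
        (term_nFwdBot ci co cr cw cm) (TR.fc0 d lft s y) (by simp only [List.length_append, List.length_cons, List.length_nil]; omega)
      intro c' hc'
      rcases (step_nFwdBot ci co cr cw cm).mp hc' with ⟨e', he, h'⟩ | ⟨he, h'⟩ <;>
        simp_all [nFwd]
  | fbend d lft =>
    refine hU_of_send (m := 0) hio hvbot (fun a c' => step_pref) term_pref ?_ ?_
    · simpa [dmap, Tape.writeMove] using TR.stable (ci := ci) (co := co) (B := B)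
        ⟨d :: lft, none, []⟩
    · omega
  | fc0 d lft s y =>
    refine hU_of_send (m := 2 * s.length + 1) hio hvbot (fun a c' => step_pref)
      term_pref ?_ ?_
    · simpa [dmap] using TR.fc1 (ci := ci) (co := co) (B := B) d lft (s ++ [y]) [] y s rfl
    · omega
  | fc1 d lft r w e s hreq =>
    rcases List.eq_nil_or_concat s with rfl | ⟨s', z, rfl⟩
    · simp only [List.nil_append] at hreq
      subst hreq
      have hq : dmap w ++ Sym.bot :: dmap lft.reverse ++ Sym.dat d :: Sym.dollar ::
            dmap ([] : List (Option D))
          = (dmap w ++ Sym.bot :: dmap lft.reverse ++ [Sym.dat d]) ++ [Sym.dollar] := by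
        simp [dmap]
      rw [hq]
      refine hU_of_recv hio shape_nFwd
        ((step_nFwd ci co cr cw cm).mpr (Or.inr (Or.inr ⟨rfl, rfl⟩))) ?_
        (term_nFwd ci co cr cw cm e) (m := 0) ?_ ?_
      · intro c' hc'
        rcases (step_nFwd ci co cr cw cm).mp hc' with ⟨e', he, h'⟩ | ⟨he, h'⟩ | ⟨he, h'⟩ <;>
          simp_all [nH]
      · simpa [dmap, Tape.writeMove] using TR.stable (ci := ci) (co := co) (B := B)
          ⟨d :: lft, e, w⟩
      · omega
    · rw [List.concat_eq_append] at hreq ⊢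
      have hq : dmap w ++ Sym.bot :: dmap lft.reverse ++ Sym.dat d :: Sym.dollar ::
            dmap (s' ++ [z])
          = (dmap w ++ Sym.bot :: dmap lft.reverse ++ Sym.dat d :: Sym.dollar :: dmap s')
            ++ [Sym.dat z] := by simp [dmap]
      rw [hq]
      refine hU_of_recv hio shape_nFwd
        ((step_nFwd ci co cr cw cm).mpr (Or.inl ⟨z, rfl, rfl⟩)) ?_
        (term_nFwd ci co cr cw cm e) (TR.fc2 d lft r w e z s' (by simpa using hreq))
        (by simp only [List.length_append, List.length_cons, List.length_nil]; omega)
      intro c' hc'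
      rcases (step_nFwd ci co cr cw cm).mp hc' with ⟨e', he, h'⟩ | ⟨he, h'⟩ | ⟨he, h'⟩ <;>
        simp_all [nFwd]
  | fc2 d lft r w e z s hreq =>
    refine hU_of_send (m := 2 * s.length + 1) hio (hvdat e) (fun a c' => step_pref)
      term_pref ?_ ?_
    · simpa [dmap] using TR.fc1 (ci := ci) (co := co) (B := B) d lft r (e :: w) z s hreq
    · omega


/-- related expressions on the left are always tape names -/
lemma TR_src {n : ℕ} {p₁ : PExp C (Sym D) B (Tape D)}
    {p₂ : PExp C (Sym D) B (TName D ⊕ List (Sym D))} (h : TR ci co n p₁ p₂) :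
    ∃ t, p₁ = .name t := by
  cases h <;> exact ⟨_, rfl⟩

/-- the stable configurations match the tape transitions exactly -/
lemma TR_hS (hio : ci ≠ co) (hrci : cr ≠ ci) (hrco : cr ≠ co) (hwci : cw ≠ ci)
    (hwco : cw ≠ co) (hmci : cm ≠ ci) (hmco : cm ≠ co)
    {n : ℕ} {p₁ : PExp C (Sym D) B (Tape D)}
    {p₂ : PExp C (Sym D) B (TName D ⊕ List (Sym D))} (h : TR ci co n p₁ p₂)
    {d0 : Option D} {q0 : List (Sym D)} (hst : p₂ = cfg ci co (nH d0) q0) :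
    (∀ a t, Step (EdTQ C D B ci co cr cw cm) p₂ a t →
      ∃ t₁ m, Step (infTapeSpec C B D cr cw cm) p₁ a t₁ ∧ TR ci co m t₁ t) ∧
    (∀ a t₁, Step (infTapeSpec C B D cr cw cm) p₁ a t₁ →
      ∃ t m, Step (EdTQ C D B ci co cr cw cm) p₂ a t ∧ TR ci co m t₁ t) ∧
    Term (EdTQ C D B ci co cr cw cm) p₂ := by
  cases h with
  | stable t =>
    refine ⟨?_, ?_, term_cfg_H ci co cr cw cm t.head _⟩
    · intro a s hstep
      rcases (step_cfg ci co cr cw cm hio).mp hstep with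
        ⟨c', hc, hnc, rfl⟩ | ⟨c', v, hv, hc, rfl, rfl⟩ | ⟨c', q', e, heq, hc, rfl, rfl⟩
      · rcases (step_nH ci co cr cw cm).mp hc with
          ⟨rfl, rfl⟩ | ⟨e, rfl, rfl⟩ | ⟨rfl, rfl⟩ | ⟨rfl, rfl⟩
        · exact ⟨.name t, 0, (step_tape cr cw cm).mpr (Or.inl ⟨rfl, rfl⟩), TR.stable t⟩
        · exact ⟨.name ⟨t.left, e, t.right⟩, 0,
            (step_tape cr cw cm).mpr (Or.inr (Or.inl ⟨e, rfl, rfl⟩)),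
            TR.stable ⟨t.left, e, t.right⟩⟩
        · exact ⟨.name (t.writeMove t.head .L), 2 * t.right.length + 7,
            (step_tape cr cw cm).mpr (Or.inr (Or.inr (Or.inl ⟨rfl, rfl⟩))),
            TR.hl t.head t.left t.right⟩
        · exact ⟨.name (t.writeMove t.head .R),
            2 * t.left.length + 2 * t.right.length + 8,
            (step_tape cr cw cm).mpr (Or.inr (Or.inr (Or.inr ⟨rfl, rfl⟩))),
            TR.hr t.head t.left t.right⟩
      · rcases (step_nH ci co cr cw cm).mp hc with
          ⟨he, -⟩ | ⟨e, he, -⟩ | ⟨he, -⟩ | ⟨he, -⟩ <;> simp_all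
      · rcases (step_nH ci co cr cw cm).mp hc with
          ⟨he, -⟩ | ⟨e, he, -⟩ | ⟨he, -⟩ | ⟨he, -⟩ <;> simp_all
    · intro a t₁ h1
      rcases (step_tape cr cw cm).mp h1 with
        ⟨rfl, rfl⟩ | ⟨e, rfl, rfl⟩ | ⟨rfl, rfl⟩ | ⟨rfl, rfl⟩
      · refine ⟨_, 0, (step_cfg ci co cr cw cm hio).mpr (Or.inl ⟨nH t.head,
          (step_nH ci co cr cw cm).mpr (Or.inl ⟨rfl, rfl⟩), by simp [hrci, hrco], rfl⟩),
          TR.stable t⟩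
      · refine ⟨_, 0, (step_cfg ci co cr cw cm hio).mpr (Or.inl ⟨nH e,
          (step_nH ci co cr cw cm).mpr (Or.inr (Or.inl ⟨e, rfl, rfl⟩)),
          by simp [hwci, hwco], rfl⟩), TR.stable ⟨t.left, e, t.right⟩⟩
      · refine ⟨_, 2 * t.right.length + 7, (step_cfg ci co cr cw cm hio).mpr
          (Or.inl ⟨nHL t.head, (step_nH ci co cr cw cm).mpr
            (Or.inr (Or.inr (Or.inl ⟨rfl, rfl⟩))), by simp [hmci, hmco], rfl⟩),
          TR.hl t.head t.left t.right⟩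
      · refine ⟨_, 2 * t.left.length + 2 * t.right.length + 8,
          (step_cfg ci co cr cw cm hio).mpr (Or.inl ⟨nHR t.head,
            (step_nH ci co cr cw cm).mpr (Or.inr (Or.inr (Or.inr ⟨rfl, rfl⟩))),
            by simp [hmci, hmco], rfl⟩), TR.hr t.head t.left t.right⟩
  | hl d lft r => simp [cfg, nH, nHL, qname] at hst
  | l2 d lft r => simp [cfg, nH, pAfterHL, qname] at hst
  | l3 d r => simp [cfg, nH, qname] at hst
  | l4 d r => simp [cfg, nH, qname] at hst
  | back d r u v hveq => simp [cfg, nH, nBack, qname] at hst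
  | backmid d r u v x hveq => simp [cfg, nH, qname] at hst
  | hr d lft r => simp [cfg, nH, nHR, qname] at hst
  | hr2 d lft r => simp [cfg, nH, qname] at hst
  | hr3 d lft r => simp [cfg, nH, pAfterHR, qname] at hst
  | fa1 d lft r p e s hleq => simp [cfg, nH, nFwd, qname] at hst
  | fa2 d lft r p e f s hleq => simp [cfg, nH, qname] at hst
  | fa3 d lft r p e hleq => simp [cfg, nH, qname] at hst
  | fb d lft r => simp [cfg, nH, nFwdBot, qname] at hst
  | fbend d lft => simp [cfg, nH, qname] at hst
  | fc0 d lft s y => simp [cfg, nH, qname] at hst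
  | fc1 d lft r w e s hreq => simp [cfg, nH, nFwd, qname] at hst
  | fc2 d lft r w e z s hreq => simp [cfg, nH, qname] at hst

end TapeProof3



/-- For every tape instance `δL ď δR`, the infinite tape
specification is divergence-preserving branching bisimilar to the tape
controller composed with the (infinite) queue holding `δR ⊥ δL`. -/
theorem tape_spec_dpbbisim_controller_with_queue
    {C D B : Type} [Fintype D] [DecidableEq D] (ci co cr cw cm : C)
    (hdist : List.Pairwise (· ≠ ·) [ci, co, cr, cw, cm])
    (d : Option D) (δL δR : List (Option D)) :
    DPBranchingBisimilar
      (pLTS (infTapeSpec C B D cr cw cm) (.name (⟨δL.reverse, d, δR⟩ : Tape D)))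
      (pLTS (EdTQ C D B ci co cr cw cm)
        (.par {ci, co} (.name (.inl (.H d)))
          (.name (.inr (dmap δR ++ [Sym.bot] ++ dmap δL))))) := by
  simp only [List.pairwise_cons, List.mem_cons, List.mem_singleton, List.not_mem_nil,
    forall_eq_or_imp, forall_eq, or_false, false_or, List.Pairwise.nil, and_true,
    List.not_mem_nil, forall_false, implies_true, true_and] at hdist
  obtain ⟨⟨hico, hicr, hicw, hicm⟩, ⟨hocr, hocw, hocm⟩, ⟨hrcw, hrcm⟩, hwcm⟩ := hdist
  refine @dpbb_of_indexed _
    (pLTS (infTapeSpec C B D cr cw cm) (.name (⟨δL.reverse, d, δR⟩ : Tape D)))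
    (pLTS (EdTQ C D B ci co cr cw cm)
      (.par {ci, co} (.name (.inl (.H d)))
        (.name (.inr (dmap δR ++ [Sym.bot] ++ dmap δL)))))
    (fun n s₁ s₂ => TR ci co n s₁.1 s₂.1)
    (fun s₂ => ∃ d' q', s₂.1 = cfg ci co (nH d') q') ?_ ?_ ?_ ?_ ?_
  · rintro n s₁ s₂ h t htr
    obtain ⟨t0, heq⟩ := TR_src h
    have htr' : Step (infTapeSpec C B D cr cw cm) s₁.1 none t.1 := htr
    rw [heq] at htr'
    rcases (step_tape cr cw cm).mp htr' with ⟨h', -⟩ | ⟨e, h', -⟩ | ⟨h', -⟩ | ⟨h', -⟩ <;>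
      simp_all
  · rintro n s₁ s₂ h
    obtain ⟨t0, heq⟩ := TR_src h
    show Term (infTapeSpec C B D cr cw cm) s₁.1
    rw [heq]
    exact term_tape cr cw cm t0
  · rintro n s₁ s₂ h hns
    have hns' : ∀ d' q', s₂.1 ≠ cfg ci co (nH d') q' := fun d' q' hq => hns ⟨d', q', hq⟩
    obtain ⟨hnt, p₂', m, hm, hstep, hrel, huniq⟩ := TR_hU hico h hns'
    refine ⟨hnt, ⟨p₂', s₂.2.tail ⟨none, hstep⟩⟩, m, hm, hstep, hrel, ?_⟩
    intro a t ht
    obtain ⟨ha, ht2⟩ := huniq a t.1 ht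
    exact ⟨ha, Subtype.ext ht2⟩
  · rintro n s₁ s₂ h ⟨d0, q0, heq⟩
    obtain ⟨h1, h2, h3⟩ := TR_hS hico hicr.symm hocr.symm hicw.symm hocw.symm
      hicm.symm hocm.symm h heq
    refine ⟨?_, ?_, h3⟩
    · intro a t ht
      obtain ⟨t₁, m, hstep1, hrel⟩ := h1 a t.1 ht
      exact ⟨⟨t₁, s₁.2.tail ⟨a, hstep1⟩⟩, m, hstep1, hrel⟩
    · intro a t₁ ht
      obtain ⟨t, m, hstep2, hrel⟩ := h2 a t₁.1 ht
      exact ⟨⟨t, s₂.2.tail ⟨a, hstep2⟩⟩, m, hstep2, hrel⟩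
  · refine ⟨0, ?_⟩
    show TR ci co 0 (.name (⟨δL.reverse, d, δR⟩ : Tape D))
      (.par {ci, co} (.name (.inl (.H d))) (.name (.inr (dmap δR ++ [Sym.bot] ++ dmap δL))))
    have := TR.stable (ci := ci) (co := co) (B := B) (⟨δL.reverse, d, δR⟩ : Tape D)
    simpa [cfg, nH, qname] using this

end RTMPaper
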